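/- Let R be a finite binary relation and let J = {(a,b,c) : (a,b)∈R, (c,b)∈R} be the full 2-path self-join and T = {(a,c) : ∃b, (a,b)∈R ∧ (c,b)∈R} its projection. Then |J| ≤ |R| · √|T|. -/

import Mathlib

open Finset

/-- For the 2-path self-join, the full join size is at most `|R| · √|T|`,
where `T` is the projected output. -/
theorem stmt_10 {α : Type*} [DecidableEq α] (R : Finset (α × α))
    (J : Finset ((α × α) × (α × α)))
    (hJ : J = (R ×ˢ R).filter (fun p => p.1.2 = p.2.2))
    (T : Finset (α × α)) (hT : T = J.image (fun p => (p.1.1, p.2.1))) :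
    (J.card : ℝ) ≤ (R.card : ℝ) * Real.sqrt T.card := by
  classical
  -- each fiber has size at most sqrt |T|
  have hfib : ∀ r : α × α, r ∈ R →
      ((R.filter (fun s => s.2 = r.2)).card : ℝ) ≤ Real.sqrt T.card := by
    intro r hr
    set F := R.filter (fun s => s.2 = r.2) with hF
    have hsq : (F.card : ℝ) * F.card ≤ (T.card : ℝ) := by
      have hcard : (F ×ˢ F).card ≤ T.card := by
        apply Finset.card_le_card_of_injOn (fun p => (p.1.1, p.2.1))
        · intro p hp
          simp only [Finset.mem_coe, Finset.mem_product, hF, Finset.mem_filter] at hp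
          subst hT
          refine Finset.mem_image.mpr ⟨p, ?_, rfl⟩
          subst hJ
          simp only [Finset.mem_filter, Finset.mem_product]
          exact ⟨⟨hp.1.1, hp.2.1⟩, by rw [hp.1.2, hp.2.2]⟩
        · intro p hp q hq h
          simp only [Finset.coe_product, Set.mem_prod, Finset.mem_coe, hF,
            Finset.mem_filter] at hp hq
          simp only [Prod.mk.injEq] at h
          obtain ⟨h1, h2⟩ := h
          have e1 : p.1 = q.1 := Prod.ext h1 (hp.1.2.trans hq.1.2.symm)
          have e2 : p.2 = q.2 := Prod.ext h2 (hp.2.2.trans hq.2.2.symm)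
          exact Prod.ext e1 e2
      have := Finset.card_product F F ▸ hcard
      exact_mod_cast this
    nlinarith [Real.sq_sqrt (by positivity : (0:ℝ) ≤ (T.card:ℝ)),
      Real.sqrt_nonneg (T.card : ℝ), Nat.cast_nonneg (α := ℝ) F.card]
  -- card J as a sum of fibers
  have hJcard : J.card = ∑ r ∈ R, (R.filter (fun s => s.2 = r.2)).card := by
    subst hJ
    rw [Finset.card_eq_sum_card_fiberwise (f := Prod.fst) (t := R)
      (fun p hp => (Finset.mem_product.mp (Finset.mem_filter.mp hp).1).1)]
    apply Finset.sum_congr rfl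
    intro r hr
    have hset : ((R ×ˢ R).filter (fun p => p.1.2 = p.2.2)).filter
        (fun p => p.1 = r) = (R.filter (fun s => s.2 = r.2)).image
        (fun s => (r, s)) := by
      ext p
      simp only [Finset.mem_filter, Finset.mem_product, Finset.mem_image]
      constructor
      · rintro ⟨⟨⟨h1, h2⟩, h3⟩, rfl⟩
        exact ⟨p.2, ⟨h2, h3.symm⟩, rfl⟩
      · rintro ⟨s, ⟨hs1, hs2⟩, rfl⟩
        exact ⟨⟨⟨hr, hs1⟩, hs2.symm⟩, rfl⟩
    rw [hset, Finset.card_image_of_injective _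
      (fun a b hab => (Prod.mk.injEq _ _ _ _ ▸ hab).2)]
  calc (J.card : ℝ) = ∑ r ∈ R, ((R.filter (fun s => s.2 = r.2)).card : ℝ) := by
        rw [hJcard]; push_cast; ring
    _ ≤ ∑ _r ∈ R, Real.sqrt T.card := Finset.sum_le_sum hfib
    _ = (R.card : ℝ) * Real.sqrt T.card := by
        rw [Finset.sum_const, nsmul_eq_mul]
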